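/- For any binary sequence ω with complement ω̄, the map Ψ : ℤ → ℤ, Ψ(z) = −z + 1, is a graph isomorphism from X_ω to X_{ω̄}: it maps E_ω^0 onto E_{ω̄}^0 and each E_ω^n onto E_{ω̄}^n. -/

import Mathlib

def aseq (x : ℕ → ℤ) (n : ℕ) : ℤ :=
  (∑ i ∈ Finset.range n, x (i + 1) * 2 ^ i) - 2 ^ (n - 1)

def edgeSym (x : ℕ → ℤ) : ℕ → Set (Sym2 ℤ)
  | 0 => {e | ∃ z : ℤ, e = s(z, z + 1)}
  | n + 1 => {e | ∃ z : ℤ,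
      e = s(2 ^ (n + 1) * z - aseq x (n + 1), 2 ^ (n + 1) * (z + 1) - aseq x (n + 1))}

lemma aseq_compl (x : ℕ → ℤ) (n : ℕ) :
    aseq (fun i => 1 - x i) (n + 1) = -1 - aseq x (n + 1) := by
  unfold aseq
  have h : ∑ i ∈ Finset.range (n + 1), ((1:ℤ) - x (i + 1)) * 2 ^ i
      = (2 ^ (n + 1) - 1) - ∑ i ∈ Finset.range (n + 1), x (i + 1) * 2 ^ i := by
    simp only [sub_mul, one_mul]
    rw [Finset.sum_sub_distrib]
    congr 1
    have h1 := geom_sum_mul (2:ℤ) (n + 1)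
    simp at h1
    linarith
  rw [h]
  have : (n + 1) - 1 = n := rfl
  rw [this]
  have h2 : (2:ℤ) ^ (n + 1) = 2 * 2 ^ n := by ring
  rw [h2]
  ring

theorem stmt11 (x : ℕ → ℤ) (hx : ∀ i, x i = 0 ∨ x i = 1) :
    Function.Bijective (fun z : ℤ => -z + 1) ∧
    ∀ k : ℕ, Sym2.map (fun z : ℤ => -z + 1) '' edgeSym x k
      = edgeSym (fun i => 1 - x i) k := by
  constructor
  · exact Function.Involutive.bijective (fun z => by ring)
  · intro k
    ext e
    simp only [Set.mem_image]
    cases k with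
    | zero =>
      simp only [edgeSym, Set.mem_setOf_eq]
      constructor
      · rintro ⟨e', ⟨z, rfl⟩, rfl⟩
        refine ⟨-z, ?_⟩
        rw [Sym2.map_pair_eq, Sym2.eq_swap]
        congr 1 <;> ring
      · rintro ⟨z, rfl⟩
        refine ⟨s(-z, -z + 1), ⟨-z, rfl⟩, ?_⟩
        rw [Sym2.map_pair_eq, Sym2.eq_swap]
        congr 1 <;> ring
    | succ n =>
      simp only [edgeSym, Set.mem_setOf_eq]
      constructor
      · rintro ⟨e', ⟨z, rfl⟩, rfl⟩
        refine ⟨-z - 1, ?_⟩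
        rw [Sym2.map_pair_eq, Sym2.eq_swap, aseq_compl]
        congr 1 <;> ring
      · rintro ⟨z, rfl⟩
        refine ⟨s(2 ^ (n + 1) * (-z - 1) - aseq x (n + 1),
          2 ^ (n + 1) * (-z - 1 + 1) - aseq x (n + 1)), ⟨-z - 1, rfl⟩, ?_⟩
        rw [Sym2.map_pair_eq, Sym2.eq_swap, aseq_compl]
        congr 1 <;> ring
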